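/- The generating function of the Witten indices of ladders over even cycles of length 2 satisfies: ∑_{m≥0} Z(Pₘ × C₂) t^m = −(t−1)/(t²+1); equivalently the sequence Z(Pₘ × C₂) for m = 0,1,2,3,… is periodic with period 4, taking values 1, −1, −1, 1 repeatedly. -/

import Mathlib

open scoped Classical

noncomputable section

/-- The Witten index `Z = 1 - χ(Ind(R))` of the independence complex of the relation `R`. -/
def zRel {V : Type*} [Fintype V] (R : V → V → Prop) : ℤ :=
  1 - ∑ s ∈ Finset.univ.filter
      (fun s : Finset V => s.Nonempty ∧ ∀ u ∈ s, ∀ w ∈ s, ¬ R u w),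
    (-1 : ℤ) ^ (s.card - 1)

/-- The grid graph `Pₘ × Pₙ` on `Fin m × Fin n` (edges between vertices at distance 1);
by the convention `C₂ = P₂`, the ladder `Pₘ × C₂` is `Pₘ × P₂ = gridPP m 2`. -/
def gridPP (m n : ℕ) : Fin m × Fin n → Fin m × Fin n → Prop :=
  fun a b =>
    (a.1 = b.1 ∧ (a.2.val + 1 = b.2.val ∨ b.2.val + 1 = a.2.val)) ∨
    (a.2 = b.2 ∧ (a.1.val + 1 = b.1.val ∨ b.1.val + 1 = a.1.val))

/-! ### Auxiliary development -/

/-- Column states for the ladder: empty, top occupied, bottom occupied. -/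
abbrev LadSt := Option (Fin 2)

/-- weight of a column state -/
def lwt (x : LadSt) : ℤ := if x.isSome then -1 else 1

/-- a sequence of column states is valid iff no two consecutive columns occupy the same row -/
def lvalid {m : ℕ} (f : Fin m → LadSt) : Prop :=
  ∀ (i : ℕ) (h : i + 1 < m) (k : Fin 2),
    ¬ (f ⟨i, by omega⟩ = some k ∧ f ⟨i + 1, h⟩ = some k)

/-- signed sum over valid state sequences -/
noncomputable def Zf (m : ℕ) : ℤ :=
  ∑ f ∈ Finset.univ.filter (fun f : Fin m → LadSt => lvalid f), ∏ i, lwt (f i)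

/-- refined sum, recording the first column state -/
noncomputable def Qf (m : ℕ) (x : LadSt) : ℤ :=
  ∑ f ∈ Finset.univ.filter (fun f : Fin (m + 1) → LadSt => lvalid f ∧ f 0 = x),
    ∏ i, lwt (f i)

lemma zRel_eq_sum {V : Type*} [Fintype V] (R : V → V → Prop) :
    zRel R = ∑ s ∈ Finset.univ.filter
      (fun s : Finset V => ∀ u ∈ s, ∀ w ∈ s, ¬ R u w), (-1 : ℤ) ^ s.card := by
  have hset : Finset.univ.filter (fun s : Finset V => ∀ u ∈ s, ∀ w ∈ s, ¬ R u w)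
      = insert ∅ (Finset.univ.filter
        (fun s : Finset V => s.Nonempty ∧ ∀ u ∈ s, ∀ w ∈ s, ¬ R u w)) := by
    ext s
    simp only [Finset.mem_insert, Finset.mem_filter, Finset.mem_univ, true_and]
    constructor
    · intro h
      rcases eq_or_ne s ∅ with h0 | h0
      · exact Or.inl h0
      · exact Or.inr ⟨Finset.nonempty_iff_ne_empty.2 h0, h⟩
    · rintro (rfl | ⟨-, h⟩)
      · simp
      · exact h
  have hnot : (∅ : Finset V) ∉ Finset.univ.filter
      (fun s : Finset V => s.Nonempty ∧ ∀ u ∈ s, ∀ w ∈ s, ¬ R u w) := by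
    simp
  rw [zRel, hset, Finset.sum_insert hnot, Finset.card_empty, pow_zero]
  have hterm : ∀ s ∈ Finset.univ.filter
      (fun s : Finset V => s.Nonempty ∧ ∀ u ∈ s, ∀ w ∈ s, ¬ R u w),
      (-1 : ℤ) ^ s.card = -(-1 : ℤ) ^ (s.card - 1) := by
    intro s hs
    simp only [Finset.mem_filter] at hs
    have h1 : 1 ≤ s.card := Finset.card_pos.2 hs.2.1
    obtain ⟨n, hn⟩ : ∃ n, s.card = n + 1 := ⟨s.card - 1, by omega⟩
    rw [hn, pow_succ]
    simp
  rw [Finset.sum_congr rfl hterm, Finset.sum_neg_distrib]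
  ring

lemma prod_lwt (m : ℕ) (f : Fin m → LadSt) :
    ∏ i, lwt (f i)
      = (-1 : ℤ) ^ (Finset.univ.filter (fun p : Fin m × Fin 2 => f p.1 = some p.2)).card := by
  have h1 : ∏ i, lwt (f i)
      = (-1 : ℤ) ^ (Finset.univ.filter (fun i : Fin m => (f i).isSome)).card := by
    rw [← Finset.prod_filter_mul_prod_filter_not Finset.univ (fun i => (f i).isSome)]
    have h2 : ∏ i ∈ Finset.univ.filter (fun i : Fin m => (f i).isSome), lwt (f i)
        = ∏ _i ∈ Finset.univ.filter (fun i : Fin m => (f i).isSome), (-1 : ℤ) := by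
      refine Finset.prod_congr rfl ?_
      intro i hi
      simp only [Finset.mem_filter] at hi
      simp [lwt, hi.2]
    have h3 : ∏ i ∈ Finset.univ.filter (fun i : Fin m => ¬ (f i).isSome), lwt (f i) = 1 := by
      refine Finset.prod_eq_one ?_
      intro i hi
      simp only [Finset.mem_filter] at hi
      simp [lwt, hi.2]
    rw [h2, h3, Finset.prod_const, mul_one]
  rw [h1]
  congr 1
  refine (Finset.card_nbij (fun p : Fin m × Fin 2 => p.1) ?_ ?_ ?_).symm
  · intro p hp
    simp only [Finset.coe_filter, Set.mem_setOf_eq, Finset.mem_filter, Finset.mem_univ, true_and] at hp ⊢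
    simp [hp]
  · intro p hp q hq hpq
    simp only [Finset.coe_filter, Set.mem_setOf_eq, Finset.mem_univ, true_and] at hp hq
    simp only at hpq
    have : some p.2 = some q.2 := by rw [← hp, ← hq, hpq]
    exact Prod.ext hpq (by simpa using this)
  · intro i hi
    simp only [Finset.coe_filter, Set.mem_setOf_eq, Finset.mem_univ, true_and] at hi
    exact ⟨(i, (f i).get hi), by simp [Finset.mem_coe, Finset.mem_filter], rfl⟩

def toSeq {m : ℕ} (s : Finset (Fin m × Fin 2)) : Fin m → LadSt :=
  fun i => if (i, (0 : Fin 2)) ∈ s then some 0 else if (i, (1 : Fin 2)) ∈ s then some 1 else none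

def toSet {m : ℕ} (f : Fin m → LadSt) : Finset (Fin m × Fin 2) :=
  Finset.univ.filter (fun p => f p.1 = some p.2)

lemma toSeq_some {m : ℕ} {s : Finset (Fin m × Fin 2)} {i : Fin m} {k : Fin 2}
    (h : toSeq s i = some k) : (i, k) ∈ s := by
  unfold toSeq at h
  split_ifs at h with h1 h2
  · obtain rfl : (0 : Fin 2) = k := by simpa using h
    exact h1
  · obtain rfl : (1 : Fin 2) = k := by simpa using h
    exact h2

lemma zRel_grid (m : ℕ) : zRel (gridPP m 2) = Zf m := by
  have hno2 : ∀ (s : Finset (Fin m × Fin 2)), (∀ u ∈ s, ∀ w ∈ s, ¬ gridPP m 2 u w) →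
      ∀ i : Fin m, ¬ ((i, (0:Fin 2)) ∈ s ∧ (i, (1:Fin 2)) ∈ s) := by
    rintro s hs i ⟨h0, h1⟩
    exact hs _ h0 _ h1 (Or.inl ⟨rfl, Or.inl rfl⟩)
  have hts : ∀ (s : Finset (Fin m × Fin 2)), (∀ u ∈ s, ∀ w ∈ s, ¬ gridPP m 2 u w) →
      toSet (toSeq s) = s := by
    intro s hs
    ext p
    obtain ⟨i, r⟩ := p
    simp only [toSet, Finset.mem_filter, Finset.mem_univ, true_and]
    constructor
    · exact toSeq_some
    · intro hp
      have hr : r = 0 ∨ r = 1 := by omega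
      rcases hr with rfl | rfl
      · simp [toSeq, hp]
      · have h0 : (i, (0:Fin 2)) ∉ s := fun h0 => hno2 s hs i ⟨h0, hp⟩
        simp [toSeq, hp, h0]
  rw [zRel_eq_sum, Zf]
  refine Finset.sum_nbij' (i := fun s => toSeq s) (j := fun f => toSet f) ?_ ?_ ?_ ?_ ?_
  · -- independent set gives valid sequence
    intro s hs
    simp only [Finset.mem_filter, Finset.mem_univ, true_and] at hs ⊢
    intro i h k hk
    have h1 : ((⟨i, by omega⟩ : Fin m), k) ∈ s := toSeq_some hk.1
    have h2 : ((⟨i + 1, h⟩ : Fin m), k) ∈ s := toSeq_some hk.2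
    exact hs _ h1 _ h2 (Or.inr ⟨rfl, Or.inl rfl⟩)
  · -- valid sequence gives independent set
    intro f hf
    simp only [Finset.mem_filter, Finset.mem_univ, true_and] at hf ⊢
    intro u hu w hw hR
    simp only [toSet, Finset.mem_filter, Finset.mem_univ, true_and] at hu hw
    rcases hR with ⟨he, hadj⟩ | ⟨he, hadj⟩
    · -- same column, adjacent rows: impossible, one vertex per column
      rw [he, hw] at hu
      have : u.2 = w.2 := by simpa using hu.symm
      omega
    · -- same row, adjacent columns: contradicts validity
      rcases hadj with hadj | hadj
      · refine hf u.1.val (by omega) u.2 ⟨?_, ?_⟩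
        · rw [show (⟨u.1.val, by omega⟩ : Fin m) = u.1 from Fin.eta _ _]; exact hu
        · rw [show (⟨u.1.val + 1, by omega⟩ : Fin m) = w.1 from Fin.ext hadj]
          rw [hw, he]
      · refine hf w.1.val (by omega) u.2 ⟨?_, ?_⟩
        · rw [show (⟨w.1.val, by omega⟩ : Fin m) = w.1 from Fin.eta _ _]
          rw [hw, he]
        · rw [show (⟨w.1.val + 1, by omega⟩ : Fin m) = u.1 from Fin.ext hadj]; exact hu
  · intro s hs
    simp only [Finset.mem_filter, Finset.mem_univ, true_and] at hs
    exact hts s hs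
  · intro f hf
    funext i
    cases hfi : f i with
    | none => simp [toSeq, toSet, hfi]
    | some k =>
      have hk : k = 0 ∨ k = 1 := by omega
      rcases hk with rfl | rfl
      · simp [toSeq, toSet, hfi]
      · simp [toSeq, toSet, hfi]
  · intro s hs
    simp only [Finset.mem_filter, Finset.mem_univ, true_and] at hs
    rw [prod_lwt]
    rw [show Finset.univ.filter (fun p : Fin m × Fin 2 => toSeq s p.1 = some p.2)
        = toSet (toSeq s) from rfl, hts s hs]

lemma Zf_zero : Zf 0 = 1 := by
  rw [Zf, Finset.filter_true_of_mem (fun f _ => by intro i h k; omega)]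
  simp

lemma Qf_zero (x : LadSt) : Qf 0 x = lwt x := by
  rw [Qf, Finset.sum_filter]
  rw [Fintype.sum_eq_single (fun _ : Fin 1 => x)]
  · have hv : lvalid (fun _ : Fin 1 => x) := by intro i h k; omega
    simp [hv]
  · intro g hg
    have : ¬ (lvalid g ∧ g 0 = x) := by
      rintro ⟨-, h0⟩
      apply hg
      funext i
      have : i = 0 := Subsingleton.elim _ _
      rw [this, h0]
    simp [this]

/-- compatibility of adjacent column states -/
def lcompat (x y : LadSt) : Prop := ∀ k : Fin 2, ¬ (x = some k ∧ y = some k)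

lemma lvalid_cons {m : ℕ} (a : LadSt) (g : Fin (m + 1) → LadSt) :
    lvalid (Fin.cons a g : Fin (m + 2) → LadSt) ↔ lvalid g ∧ lcompat a (g 0) := by
  constructor
  · intro h
    constructor
    · intro i hi k hk
      refine h (i + 1) (by omega) k ⟨?_, ?_⟩
      · rw [show (⟨i + 1, by omega⟩ : Fin (m + 2)) = Fin.succ ⟨i, by omega⟩ from rfl,
          Fin.cons_succ]
        exact hk.1
      · rw [show (⟨i + 1 + 1, by omega⟩ : Fin (m + 2)) = Fin.succ ⟨i + 1, hi⟩ from rfl,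
          Fin.cons_succ]
        exact hk.2
    · intro k hk
      refine h 0 (by omega) k ⟨?_, ?_⟩
      · rw [show (⟨0, by omega⟩ : Fin (m + 2)) = 0 from rfl, Fin.cons_zero]
        exact hk.1
      · rw [show (⟨1, by omega⟩ : Fin (m + 2)) = Fin.succ 0 from rfl, Fin.cons_succ]
        exact hk.2
  · rintro ⟨hg, hc⟩ i hi k hk
    cases i with
    | zero =>
      refine hc k ⟨?_, ?_⟩
      · have := hk.1
        rwa [show (⟨0, by omega⟩ : Fin (m + 2)) = 0 from rfl, Fin.cons_zero] at this
      · have := hk.2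
        rwa [show (⟨0 + 1, hi⟩ : Fin (m + 2)) = Fin.succ 0 from rfl, Fin.cons_succ] at this
    | succ j =>
      refine hg j (by omega) k ⟨?_, ?_⟩
      · have := hk.1
        rwa [show (⟨j + 1, by omega⟩ : Fin (m + 2)) = Fin.succ ⟨j, by omega⟩ from rfl,
          Fin.cons_succ] at this
      · have := hk.2
        rwa [show (⟨j + 1 + 1, hi⟩ : Fin (m + 2)) = Fin.succ ⟨j + 1, by omega⟩ from rfl,
          Fin.cons_succ] at this

/-- the cons equivalence specialised to our setting -/
def consEquiv (m : ℕ) : LadSt × (Fin (m + 1) → LadSt) ≃ (Fin (m + 2) → LadSt) where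
  toFun p := Fin.cons p.1 p.2
  invFun f := (f 0, fun i => f i.succ)
  left_inv p := by
    obtain ⟨a, g⟩ := p
    simp [Fin.cons_zero, Fin.cons_succ]
  right_inv f := Fin.cons_self_tail f

lemma Zf_succ (m : ℕ) : Zf (m + 1) = Qf m none + Qf m (some 0) + Qf m (some 1) := by
  have hq : ∀ x : LadSt, Qf m x
      = ∑ f : Fin (m + 1) → LadSt, if lvalid f ∧ f 0 = x then ∏ i, lwt (f i) else 0 := by
    intro x
    rw [Qf, Finset.sum_filter]
  have key : Zf (m + 1) = ∑ x : LadSt, Qf m x := by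
    rw [Zf, Finset.sum_filter]
    have step : ∀ f : Fin (m + 1) → LadSt,
        (if lvalid f then ∏ i, lwt (f i) else 0)
          = ∑ x : LadSt, if lvalid f ∧ f 0 = x then ∏ i, lwt (f i) else 0 := by
      intro f
      by_cases hv : lvalid f
      · simp only [hv, true_and, if_true]
        rw [Finset.sum_ite_eq Finset.univ (f 0) (fun _ => ∏ i, lwt (f i))]
        simp
      · simp [hv]
    rw [Finset.sum_congr rfl (fun f _ => step f), Finset.sum_comm]
    exact Finset.sum_congr rfl (fun x _ => (hq x).symm)
  rw [key, Fintype.sum_option, Fin.sum_univ_two]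
  ring

lemma Qf_succ (m : ℕ) (x : LadSt) :
    Qf (m + 1) x = lwt x * ∑ y : LadSt, if lcompat x y then Qf m y else 0 := by
  have hq : ∀ y : LadSt, Qf m y
      = ∑ g : Fin (m + 1) → LadSt, if lvalid g ∧ g 0 = y then ∏ i, lwt (g i) else 0 := by
    intro y
    rw [Qf, Finset.sum_filter]
  rw [Qf, Finset.sum_filter, ← Equiv.sum_comp (consEquiv m)
    (fun f => if lvalid f ∧ f 0 = x then ∏ i, lwt (f i) else 0), Fintype.sum_prod_type]
  have hterm : ∀ (a : LadSt) (g : Fin (m + 1) → LadSt),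
      (if lvalid (Fin.cons a g : Fin (m + 2) → LadSt) ∧ (Fin.cons a g : Fin (m + 2) → LadSt) 0 = x
        then ∏ i, lwt ((Fin.cons a g : Fin (m + 2) → LadSt) i) else 0)
      = if (lvalid g ∧ lcompat a (g 0)) ∧ a = x then lwt a * ∏ i, lwt (g i) else 0 := by
    intro a g
    rw [Fin.cons_zero]
    congr 1
    · rw [lvalid_cons]
    · rw [← Fin.prod_cons (lwt a) (fun i => lwt (g i))]
      exact Finset.prod_congr rfl (fun i _ => by
        refine Fin.cases ?_ ?_ i
        · rw [Fin.cons_zero, Fin.cons_zero]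
        · intro j; rw [Fin.cons_succ, Fin.cons_succ])
  refine Eq.trans (Finset.sum_congr rfl fun a _ => Finset.sum_congr rfl fun g _ => hterm a g) ?_
  have swap : ∀ a : LadSt, (∑ g : Fin (m + 1) → LadSt,
      if (lvalid g ∧ lcompat a (g 0)) ∧ a = x then lwt a * ∏ i, lwt (g i) else 0)
      = if a = x then (∑ g : Fin (m + 1) → LadSt,
          if lvalid g ∧ lcompat a (g 0) then lwt a * ∏ i, lwt (g i) else 0) else 0 := by
    intro a
    by_cases hax : a = x
    · simp [hax]
    · simp [hax]
  rw [Finset.sum_congr rfl (fun a _ => swap a), Finset.sum_ite_eq' Finset.univ x _]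
  simp only [Finset.mem_univ, if_true]
  rw [Finset.mul_sum]
  have hrhs : ∀ y : LadSt, lwt x * (if lcompat x y then Qf m y else 0)
      = ∑ g : Fin (m + 1) → LadSt,
          if (lvalid g ∧ g 0 = y) ∧ lcompat x y then lwt x * ∏ i, lwt (g i) else 0 := by
    intro y
    by_cases hc : lcompat x y
    · rw [if_pos hc, hq y, Finset.mul_sum]
      refine Finset.sum_congr rfl fun g _ => ?_
      by_cases hg : lvalid g ∧ g 0 = y
      · simp [hg, hc]
      · simp [hg, hc]
    · simp [hc]
  rw [Finset.sum_congr rfl (fun y _ => hrhs y), Finset.sum_comm]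
  refine Finset.sum_congr rfl fun g _ => ?_
  symm
  have hiff : ∀ y : LadSt, ((lvalid g ∧ g 0 = y) ∧ lcompat x y)
      ↔ (g 0 = y ∧ (lvalid g ∧ lcompat x (g 0))) := by
    intro y
    constructor
    · rintro ⟨⟨h1, rfl⟩, h3⟩; exact ⟨rfl, h1, h3⟩
    · rintro ⟨rfl, h1, h3⟩; exact ⟨⟨h1, rfl⟩, h3⟩
  calc (∑ y : LadSt, if (lvalid g ∧ g 0 = y) ∧ lcompat x y then lwt x * ∏ i, lwt (g i) else 0)
      = ∑ y : LadSt, if g 0 = y ∧ (lvalid g ∧ lcompat x (g 0)) then lwt x * ∏ i, lwt (g i) else 0 :=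
        Finset.sum_congr rfl fun y _ => if_congr (hiff y) rfl rfl
    _ = _ := by
        by_cases hg : lvalid g ∧ lcompat x (g 0)
        · simp only [hg, and_true]
          rw [Finset.sum_ite_eq Finset.univ (g 0) _]
          simp [hg]
        · simp [hg]

lemma lcompat_none_left (y : LadSt) : lcompat none y := fun _ hk => Option.some_ne_none _ hk.1.symm

lemma lcompat_none_right (x : LadSt) : lcompat x none := fun _ hk => Option.some_ne_none _ hk.2.symm

lemma lcompat_some {a b : Fin 2} (h : a ≠ b) : lcompat (some a) (some b) := by
  rintro k ⟨h1, h2⟩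
  rw [Option.some.injEq] at h1 h2
  exact h (h1.trans h2.symm)

lemma not_lcompat_some (a : Fin 2) : ¬ lcompat (some a) (some a) := fun h => h a ⟨rfl, rfl⟩

lemma lwt_none : lwt none = 1 := rfl

lemma lwt_some (k : Fin 2) : lwt (some k) = -1 := rfl

lemma Qf_succ_none (m : ℕ) :
    Qf (m + 1) none = Qf m none + Qf m (some 0) + Qf m (some 1) := by
  rw [Qf_succ, Fintype.sum_option, Fin.sum_univ_two, lwt_none,
    if_pos (lcompat_none_left _), if_pos (lcompat_none_left _), if_pos (lcompat_none_left _)]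
  ring

lemma Qf_succ_s0 (m : ℕ) :
    Qf (m + 1) (some 0) = -(Qf m none + Qf m (some 1)) := by
  rw [Qf_succ, Fintype.sum_option, Fin.sum_univ_two, lwt_some,
    if_pos (lcompat_none_right _), if_neg (not_lcompat_some 0),
    if_pos (lcompat_some (by decide : (0 : Fin 2) ≠ 1))]
  ring

lemma Qf_succ_s1 (m : ℕ) :
    Qf (m + 1) (some 1) = -(Qf m none + Qf m (some 0)) := by
  rw [Qf_succ, Fintype.sum_option, Fin.sum_univ_two, lwt_some,
    if_pos (lcompat_none_right _), if_pos (lcompat_some (by decide : (1 : Fin 2) ≠ 0)),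
    if_neg (not_lcompat_some 1)]
  ring

lemma Qf_pattern (m : ℕ) :
    Qf m none = (if m % 4 = 0 then 1 else if m % 4 = 1 then -1
      else if m % 4 = 2 then -1 else 1) ∧
    Qf m (some 0) = (if m % 4 = 0 then -1 else if m % 4 = 1 then 0
      else if m % 4 = 2 then 1 else 0) ∧
    Qf m (some 1) = (if m % 4 = 0 then -1 else if m % 4 = 1 then 0
      else if m % 4 = 2 then 1 else 0) := by
  induction m with
  | zero => simp [Qf_zero, lwt_none, lwt_some]
  | succ n ih =>
    obtain ⟨h1, h2, h3⟩ := ih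
    have hr : n % 4 = 0 ∨ n % 4 = 1 ∨ n % 4 = 2 ∨ n % 4 = 3 := by omega
    rcases hr with h | h | h | h <;>
      rw [h] at h1 h2 h3 <;>
      [ (have h4 : (n + 1) % 4 = 1 := by omega);
        (have h4 : (n + 1) % 4 = 2 := by omega);
        (have h4 : (n + 1) % 4 = 3 := by omega);
        (have h4 : (n + 1) % 4 = 0 := by omega)] <;>
      simp only [Qf_succ_none, Qf_succ_s0, Qf_succ_s1, h1, h2, h3, h4] <;>
      norm_num

lemma zRel_val (m : ℕ) : zRel (gridPP m 2)
    = (if m % 4 = 0 then 1 else if m % 4 = 1 then -1 else if m % 4 = 2 then -1 else 1) := by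
  rw [zRel_grid]
  cases m with
  | zero => simpa using Zf_zero
  | succ n =>
    rw [Zf_succ]
    obtain ⟨h1, h2, h3⟩ := Qf_pattern n
    rw [h1, h2, h3]
    have hr : n % 4 = 0 ∨ n % 4 = 1 ∨ n % 4 = 2 ∨ n % 4 = 3 := by omega
    rcases hr with h | h | h | h <;>
      [ (have h4 : (n + 1) % 4 = 1 := by omega);
        (have h4 : (n + 1) % 4 = 2 := by omega);
        (have h4 : (n + 1) % 4 = 3 := by omega);
        (have h4 : (n + 1) % 4 = 0 := by omega)] <;>
      simp only [h, h4] <;> norm_num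

theorem stmt_13 :
    (PowerSeries.mk fun m : ℕ => zRel (gridPP m 2)) * (PowerSeries.X ^ 2 + 1) =
      1 - PowerSeries.X ∧
    ∀ m : ℕ, zRel (gridPP m 2) =
      if m % 4 = 0 then 1 else if m % 4 = 1 then -1 else if m % 4 = 2 then -1 else 1 := by
  constructor
  · ext n
    rw [mul_add, mul_one, map_add, PowerSeries.coeff_mul_X_pow', map_sub,
      PowerSeries.coeff_one, PowerSeries.coeff_X, PowerSeries.coeff_mk]
    by_cases h0 : n = 0
    · subst h0
      norm_num [zRel_val]
    · by_cases h1 : n = 1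
      · subst h1
        norm_num [zRel_val]
      · have h2 : 2 ≤ n := by omega
        rw [if_pos h2, PowerSeries.coeff_mk, zRel_val, zRel_val, if_neg h0, if_neg h1]
        have hr : n % 4 = 0 ∨ n % 4 = 1 ∨ n % 4 = 2 ∨ n % 4 = 3 := by omega
        rcases hr with h | h | h | h <;>
          [ (have h4 : (n - 2) % 4 = 2 := by omega);
            (have h4 : (n - 2) % 4 = 3 := by omega);
            (have h4 : (n - 2) % 4 = 0 := by omega);
            (have h4 : (n - 2) % 4 = 1 := by omega)] <;>
          simp only [h, h4] <;> norm_num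
  · exact zRel_val
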